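/- Let (X, 𝒜, μ) be a finite measure space with 0 < μ(X) < ∞ and let S : X → X be measure preserving and ergodic. Then for every A ∈ 𝒜 and μ-almost every x ∈ X, the fraction of time the orbit spends in A converges to the normalized measure of A: (1/n) · #{k : 0 ≤ k < n, Sᵏ(x) ∈ A} → μ(A)/μ(X) as n → ∞. -/

import Mathlib

open MeasureTheory Filter Topology

private lemma bddU {v : ℕ → ℝ} (hv : ∀ n, |v n| ≤ 1) :
    IsBoundedUnder (· ≤ ·) atTop v :=
  isBoundedUnder_of ⟨1, fun n => (abs_le.1 (hv n)).2⟩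

private lemma bddL {v : ℕ → ℝ} (hv : ∀ n, |v n| ≤ 1) :
    IsBoundedUnder (· ≥ ·) atTop v :=
  isBoundedUnder_of ⟨-1, fun n => (abs_le.1 (hv n)).1⟩

private lemma limsup_le_of_sub {p q : ℕ → ℝ} (hp : ∀ n, |p n| ≤ 1) (hq : ∀ n, |q n| ≤ 1)
    (h : Tendsto (fun n => p n - q n) atTop (𝓝 0)) :
    limsup p atTop ≤ limsup q atTop := by
  have key : ∀ ε : ℝ, 0 < ε → limsup p atTop ≤ limsup q atTop + ε := by
    intro ε hε
    have hev : ∀ᶠ n in atTop, p n ≤ q n + ε := by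
      filter_upwards [h.eventually_lt_const hε] with n hn
      linarith
    calc limsup p atTop ≤ limsup (fun n => q n + ε) atTop :=
          limsup_le_limsup hev ((bddL hp).isCoboundedUnder_le)
            (isBoundedUnder_of ⟨1 + ε, fun n => by linarith [(abs_le.1 (hq n)).2]⟩)
      _ = limsup q atTop + ε := limsup_add_const atTop q ε (bddU hq)
            ((bddL hq).isCoboundedUnder_le)
  by_contra hc
  push_neg at hc
  have := key ((limsup p atTop - limsup q atTop) / 2) (by linarith)
  linarith

private lemma limsup_eq_of_sub {p q : ℕ → ℝ} (hp : ∀ n, |p n| ≤ 1) (hq : ∀ n, |q n| ≤ 1)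
    (h : Tendsto (fun n => p n - q n) atTop (𝓝 0)) :
    limsup p atTop = limsup q atTop := by
  refine le_antisymm (limsup_le_of_sub hp hq h) (limsup_le_of_sub hq hp ?_)
  have : (fun n => q n - p n) = fun n => -(p n - q n) := by ext n; ring
  rw [this]
  simpa using h.neg

private lemma liminf_le_of_sub {p q : ℕ → ℝ} (hp : ∀ n, |p n| ≤ 1) (hq : ∀ n, |q n| ≤ 1)
    (h : Tendsto (fun n => p n - q n) atTop (𝓝 0)) :
    liminf p atTop ≤ liminf q atTop := by
  have key : ∀ ε : ℝ, 0 < ε → liminf p atTop ≤ liminf q atTop + ε := by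
    intro ε hε
    have hev : ∀ᶠ n in atTop, p n ≤ q n + ε := by
      filter_upwards [h.eventually_lt_const hε] with n hn
      linarith
    calc liminf p atTop ≤ liminf (fun n => q n + ε) atTop :=
          liminf_le_liminf hev (bddL hp)
            ((isBoundedUnder_of (r := (· ≤ ·)) ⟨1 + ε, fun n => by
                linarith [(abs_le.1 (hq n)).2]⟩).isCoboundedUnder_ge)
      _ = liminf q atTop + ε := liminf_add_const atTop q ε
            ((bddU hq).isCoboundedUnder_ge) (bddL hq)
  by_contra hc
  push_neg at hc
  have := key ((liminf p atTop - liminf q atTop) / 2) (by linarith)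
  linarith

private lemma liminf_eq_of_sub {p q : ℕ → ℝ} (hp : ∀ n, |p n| ≤ 1) (hq : ∀ n, |q n| ≤ 1)
    (h : Tendsto (fun n => p n - q n) atTop (𝓝 0)) :
    liminf p atTop = liminf q atTop := by
  refine le_antisymm (liminf_le_of_sub hp hq h) (liminf_le_of_sub hq hp ?_)
  have : (fun n => q n - p n) = fun n => -(p n - q n) := by ext n; ring
  rw [this]
  simpa using h.neg

private lemma key_ineq {X : Type*} [MeasurableSpace X] (μ : Measure X) [IsFiniteMeasure μ]
    (S : X → X) (hS : Measurable S) (hmap : MeasurePreserving S μ μ)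
    (f : X → ℝ) (hf : Measurable f) (hf0 : ∀ x, 0 ≤ f x) (hf1 : ∀ x, f x ≤ 1)
    (a : ℝ) (ha1 : a ≤ 1)
    (hae : ∀ᵐ x ∂μ, ∃ n : ℕ, 1 ≤ n ∧ (n : ℝ) * a ≤ ∑ k ∈ Finset.range n, f (S^[k] x)) :
    a * (μ Set.univ).toReal ≤ ∫ x, f x ∂μ := by
  rcases le_or_gt a 0 with ha0 | ha0
  · exact le_trans (mul_nonpos_of_nonpos_of_nonneg ha0 ENNReal.toReal_nonneg)
      (integral_nonneg hf0)
  -- integrability of bounded measurable functions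
  have hbdd_int : ∀ g : X → ℝ, Measurable g → (∀ x, 0 ≤ g x) → (∀ x, g x ≤ 1) →
      Integrable g μ := by
    intro g hg hg0 hg1
    refine (integrable_const (1 : ℝ)).mono' hg.aestronglyMeasurable ?_
    exact Eventually.of_forall fun x => by
      rw [Real.norm_eq_abs, abs_of_nonneg (hg0 x)]; exact hg1 x
  have hfint : Integrable f μ := hbdd_int f hf hf0 hf1
  set Sn : ℕ → X → ℝ := fun n x => ∑ k ∈ Finset.range n, f (S^[k] x) with hSn_def
  have hSnm : ∀ n, Measurable (Sn n) := fun n =>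
    Finset.measurable_sum _ fun k _ => hf.comp (hS.iterate k)
  set E : ℕ → Set X := fun N => {x | ∀ n : ℕ, 1 ≤ n → n ≤ N → Sn n x < n * a} with hE_def
  have hEm : ∀ N, MeasurableSet (E N) := by
    intro N
    have : E N = ⋂ (n : ℕ) (_ : 1 ≤ n) (_ : n ≤ N), {x | Sn n x < n * a} := by
      ext x; simp [hE_def]
    rw [this]
    exact MeasurableSet.iInter fun n => MeasurableSet.iInter fun _ =>
      MeasurableSet.iInter fun _ => measurableSet_lt (hSnm n) measurable_const
  have hanti : Antitone E := by
    intro M N hMN x hx n h1 h2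
    exact hx n h1 (h2.trans hMN)
  have h0 : μ (⋂ N, E N) = 0 := by
    refine measure_mono_null ?_ (ae_iff.mp hae)
    intro x hx
    simp only [Set.mem_iInter] at hx
    simp only [Set.mem_setOf_eq, not_exists, not_and, not_le]
    intro n hn
    exact hx n n hn le_rfl
  have htend : Tendsto (fun N => (μ (E N)).toReal) atTop (𝓝 0) := by
    have h1 : Tendsto (μ ∘ E) atTop (𝓝 (μ (⋂ N, E N))) :=
      tendsto_measure_iInter_atTop (fun N => (hEm N).nullMeasurableSet) hanti
        ⟨0, measure_ne_top μ _⟩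
    rw [h0] at h1
    exact (ENNReal.tendsto_toReal ENNReal.zero_ne_top).comp h1
  refine le_of_forall_pos_le_add ?_
  intro ε hε
  obtain ⟨N, hNε, hN1⟩ := ((htend.eventually_lt_const hε).and (eventually_ge_atTop 1)).exists
  -- the auxiliary function g
  set g : X → ℝ := fun x => max (f x) ((E N).indicator 1 x) with hg_def
  have hgm : Measurable g := hf.max (measurable_one.indicator (hEm N))
  have hg0 : ∀ x, 0 ≤ g x := fun x => le_trans (hf0 x) (le_max_left _ _)
  have hg1 : ∀ x, g x ≤ 1 := by
    intro x
    refine max_le (hf1 x) ?_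
    by_cases hx : x ∈ E N <;> simp [Set.indicator_apply, hx]
  have hgint : Integrable g μ := hbdd_int g hgm hg0 hg1
  have hfg : ∀ x, f x ≤ g x := fun x => le_max_left _ _
  have hgle : ∀ x, g x ≤ f x + (E N).indicator 1 x := by
    intro x
    refine max_le ?_ ?_
    · have : (0:ℝ) ≤ (E N).indicator 1 x := by
        by_cases hx : x ∈ E N <;> simp [Set.indicator_apply, hx]
      linarith
    · linarith [hf0 x]
  set Sg : ℕ → X → ℝ := fun n x => ∑ k ∈ Finset.range n, g (S^[k] x) with hSg_def
  have hgood : ∀ x, ∃ n : ℕ, 1 ≤ n ∧ n ≤ N ∧ (n : ℝ) * a ≤ Sg n x := by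
    intro x
    by_cases hx : x ∈ E N
    · refine ⟨1, le_rfl, hN1, ?_⟩
      have : Sg 1 x = g x := by simp [hSg_def]
      rw [this]
      have : (E N).indicator (1 : X → ℝ) x = 1 := by simp [Set.indicator_apply, hx]
      have h2 : (1:ℝ) ≤ g x := by rw [← this]; exact le_max_right _ _
      push_cast
      linarith
    · simp only [hE_def, Set.mem_setOf_eq, not_forall, not_lt] at hx
      obtain ⟨n, h1, h2, h3⟩ := hx
      refine ⟨n, h1, h2, le_trans h3 ?_⟩
      exact Finset.sum_le_sum fun k _ => hfg _
  -- block decomposition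
  have hblock : ∀ L : ℕ, ∀ x, a * ((L : ℝ) - N) ≤ Sg L x := by
    intro L
    induction L using Nat.strong_induction_on with
    | _ L IH =>
      intro x
      have hSg_nonneg : ∀ m y, 0 ≤ Sg m y := fun m y =>
        Finset.sum_nonneg fun k _ => hg0 _
      rcases le_or_gt L N with hLN | hLN
      · refine le_trans ?_ (hSg_nonneg L x)
        have : (L : ℝ) - N ≤ 0 := by
          have : (L : ℝ) ≤ N := Nat.cast_le.2 hLN
          linarith
        exact mul_nonpos_of_nonneg_of_nonpos ha0.le this
      · obtain ⟨n, hn1, hnN, hna⟩ := hgood x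
        have hnL : n ≤ L := hnN.trans hLN.le
        have hsum : ∀ (p q : ℕ) (y : X), Sg (p + q) y = Sg p y + Sg q (S^[p] y) := by
          intro p q y
          simp only [hSg_def]
          rw [Finset.sum_range_add]
          congr 1
          refine Finset.sum_congr rfl fun k _ => ?_
          rw [Nat.add_comm, Function.iterate_add_apply]
        have hsplit : Sg L x = Sg n x + Sg (L - n) (S^[n] x) := by
          conv_lhs => rw [← Nat.add_sub_cancel' hnL]
          exact hsum n (L - n) x
        have hIH : a * (((L - n : ℕ) : ℝ) - N) ≤ Sg (L - n) (S^[n] x) :=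
          IH (L - n) (by omega) _
        have hcast : ((L - n : ℕ) : ℝ) = (L : ℝ) - n := by
          push_cast [Nat.cast_sub hnL]; ring
        rw [hcast] at hIH
        rw [hsplit]
        nlinarith
  -- integral of Sg L equals L * ∫ g
  have hcomp_int : ∀ k : ℕ, Integrable (fun x => g (S^[k] x)) μ :=
    fun k => hbdd_int _ (hgm.comp (hS.iterate k)) (fun x => hg0 _) (fun x => hg1 _)
  have hcomp_eq : ∀ k : ℕ, ∫ x, g (S^[k] x) ∂μ = ∫ x, g x ∂μ := by
    intro k
    have hk : MeasurePreserving S^[k] μ μ := hmap.iterate k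
    conv_rhs => rw [← hk.map_eq]
    exact (integral_map hk.measurable.aemeasurable
      (by rw [hk.map_eq]; exact hgm.aestronglyMeasurable)).symm
  have hSg_int : ∀ L : ℕ, Integrable (Sg L) μ := fun L =>
    integrable_finset_sum _ fun k _ => hcomp_int k
  have hSg_integral : ∀ L : ℕ, ∫ x, Sg L x ∂μ = (L : ℝ) * ∫ x, g x ∂μ := by
    intro L
    induction L with
    | zero => simp [hSg_def]
    | succ L IHL =>
      have : (Sg (L + 1)) = fun x => Sg L x + g (S^[L] x) := by
        ext x; simp [hSg_def, Finset.sum_range_succ]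
      rw [this, integral_add (hSg_int L) (hcomp_int L), IHL, hcomp_eq L]
      push_cast
      ring
  -- conclude
  set m : ℝ := (μ Set.univ).toReal with hm_def
  have hL_ineq : ∀ L : ℕ, a * ((L : ℝ) - N) * m ≤ (L : ℝ) * ∫ x, g x ∂μ := by
    intro L
    have h1 : ∫ x, a * ((L : ℝ) - N) ∂μ ≤ ∫ x, Sg L x ∂μ :=
      integral_mono (integrable_const _) (hSg_int L) (fun x => hblock L x)
    rw [integral_const, smul_eq_mul, hSg_integral L] at h1
    calc a * ((L : ℝ) - N) * m = m * (a * ((L : ℝ) - N)) := by ring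
      _ ≤ (L : ℝ) * ∫ x, g x ∂μ := h1
  have hgm_le : a * m ≤ ∫ x, g x ∂μ := by
    have htend2 : Tendsto (fun L : ℕ => a * m - a * (N : ℝ) * m / L) atTop (𝓝 (a * m)) := by
      have := tendsto_const_div_atTop_nhds_zero_nat (a * (N : ℝ) * m)
      have h2 := (tendsto_const_nhds (x := a * m) (f := atTop (α := ℕ))).sub this
      simpa using h2
    refine le_of_tendsto htend2 ?_
    filter_upwards [eventually_ge_atTop 1] with L hL
    have hLpos : (0:ℝ) < L := by exact_mod_cast hL
    have h2 : a * ((L : ℝ) - N) * m = (a * m - a * (N:ℝ) * m / L) * L := by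
      field_simp
    have h3 : (a * m - a * (N:ℝ) * m / L) * L ≤ (∫ x, g x ∂μ) * L := by
      rw [← h2]
      calc a * ((L : ℝ) - N) * m ≤ (L : ℝ) * ∫ x, g x ∂μ := hL_ineq L
        _ = (∫ x, g x ∂μ) * L := by ring
    exact le_of_mul_le_mul_right h3 hLpos
  have hind_int : Integrable ((E N).indicator (1 : X → ℝ)) μ :=
    (integrable_const (1 : ℝ)).indicator (hEm N)
  have h4 : ∫ x, g x ∂μ ≤ ∫ x, (f x + (E N).indicator 1 x) ∂μ :=
    integral_mono hgint (hfint.add hind_int) hgle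
  rw [integral_add hfint hind_int, integral_indicator_one (hEm N)] at h4
  change _ ≤ _ + (μ (E N)).toReal at h4
  linarith
open Classical in
/-- Let `(X, 𝒜, μ)` be a finite measure space with `0 < μ(X) < ∞` and let
`S : X → X` be measure preserving and ergodic.  Then for every `A ∈ 𝒜` and μ-a.e. `x`, the
fraction of time the orbit of `x` spends in `A` among the first `n` iterates converges to
`μ(A)/μ(X)`. -/
theorem ergodic_visit_frequency
    {X : Type*} [MeasurableSpace X] (μ : Measure X) [IsFiniteMeasure μ]
    (hμpos : 0 < μ Set.univ)
    (S : X → X) (hS : Measurable S)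
    (hpres : ∀ A : Set X, MeasurableSet A → μ (S ⁻¹' A) = μ A)
    (herg : ∀ A : Set X, MeasurableSet A → S ⁻¹' A = A → μ A = 0 ∨ μ Aᶜ = 0)
    (A : Set X) (hA : MeasurableSet A) :
    ∀ᵐ x ∂μ, Tendsto
      (fun n : ℕ =>
        ((Finset.range n).filter (fun k => S^[k] x ∈ A)).card / (n : ℝ))
      atTop (𝓝 ((μ A).toReal / (μ Set.univ).toReal)) := by
  have hμne : μ ≠ 0 := by
    intro h
    rw [h] at hμpos
    simp at hμpos
  haveI : (MeasureTheory.ae μ).NeBot := ae_neBot.2 hμne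
  have hmap : MeasurePreserving S μ μ :=
    ⟨hS, Measure.ext fun s hs => by rw [Measure.map_apply hS hs, hpres s hs]⟩
  set f : X → ℝ := A.indicator 1 with hf_def
  have hfm : Measurable f := measurable_one.indicator hA
  have hf0 : ∀ x, 0 ≤ f x := fun x => by
    by_cases h : x ∈ A <;> simp [hf_def, Set.indicator_apply, h]
  have hf1 : ∀ x, f x ≤ 1 := fun x => by
    by_cases h : x ∈ A <;> simp [hf_def, Set.indicator_apply, h]
  have hfint : Integrable f μ := by
    refine (integrable_const (1 : ℝ)).mono' hfm.aestronglyMeasurable ?_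
    exact Eventually.of_forall fun x => by
      rw [Real.norm_eq_abs, abs_of_nonneg (hf0 x)]; exact hf1 x
  set u : ℕ → X → ℝ := fun n x => (∑ k ∈ Finset.range n, f (S^[k] x)) / n with hu_def
  have hcard : ∀ (x : X) (n : ℕ),
      (((Finset.range n).filter (fun k => S^[k] x ∈ A)).card : ℝ)
        = ∑ k ∈ Finset.range n, f (S^[k] x) := by
    intro x n
    rw [Finset.card_filter, Nat.cast_sum]
    refine Finset.sum_congr rfl fun k _ => ?_
    by_cases h : S^[k] x ∈ A <;> simp [hf_def, Set.indicator_apply, h]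
  have hsum0 : ∀ (n : ℕ) (x : X), 0 ≤ ∑ k ∈ Finset.range n, f (S^[k] x) :=
    fun n x => Finset.sum_nonneg fun k _ => hf0 _
  have hsum1 : ∀ (n : ℕ) (x : X), (∑ k ∈ Finset.range n, f (S^[k] x)) ≤ n := by
    intro n x
    calc (∑ k ∈ Finset.range n, f (S^[k] x)) ≤ ∑ _k ∈ Finset.range n, (1:ℝ) :=
          Finset.sum_le_sum fun k _ => hf1 _
      _ = n := by simp
  have hu0 : ∀ (n : ℕ) (x : X), 0 ≤ u n x := fun n x =>
    div_nonneg (hsum0 n x) (Nat.cast_nonneg n)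
  have hu1 : ∀ (n : ℕ) (x : X), u n x ≤ 1 := by
    intro n x
    simp only [hu_def]
    exact div_le_one_of_le₀ (hsum1 n x) (Nat.cast_nonneg n)
  have habs : ∀ (x : X) (n : ℕ), |u n x| ≤ 1 := fun x n =>
    abs_le.2 ⟨by linarith [hu0 n x], hu1 n x⟩
  have hum : ∀ n, Measurable (u n) := fun n =>
    (Finset.measurable_sum _ fun k _ => hfm.comp (hS.iterate k)).div_const _
  set F : X → ℝ := fun x => limsup (fun n => u n x) atTop with hF_def
  set G : X → ℝ := fun x => liminf (fun n => u n x) atTop with hG_def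
  have hFm : Measurable F := Measurable.limsup fun n => hum n
  have hGm : Measurable G := Measurable.liminf fun n => hum n
  have hdiff : ∀ x, Tendsto (fun n => u n (S x) - u n x) atTop (𝓝 0) := by
    intro x
    have heq : ∀ n : ℕ, u n (S x) - u n x = (f (S^[n] x) - f x) / n := by
      intro n
      simp only [hu_def]
      rw [div_sub_div_same, ← Finset.sum_sub_distrib]
      congr 1
      calc (∑ k ∈ Finset.range n, (f (S^[k] (S x)) - f (S^[k] x)))
          = ∑ k ∈ Finset.range n, (f (S^[k+1] x) - f (S^[k] x)) :=
            Finset.sum_congr rfl fun k _ => by rw [Function.iterate_succ_apply]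
        _ = f (S^[n] x) - f (S^[0] x) := Finset.sum_range_sub (fun k => f (S^[k] x)) n
        _ = f (S^[n] x) - f x := by simp
    refine squeeze_zero_norm (a := fun n : ℕ => 2 / n) ?_
      (tendsto_const_div_atTop_nhds_zero_nat 2)
    intro n
    rw [heq n, norm_div, Real.norm_natCast]
    rcases Nat.eq_zero_or_pos n with h | h
    · simp [h]
    · have hn : (0:ℝ) < n := by exact_mod_cast h
      have habs2 : ‖f (S^[n] x) - f x‖ ≤ 2 := by
        rw [Real.norm_eq_abs, abs_le]
        constructor <;> nlinarith [hf0 (S^[n] x), hf1 (S^[n] x), hf0 x, hf1 x]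
      show ‖f (S^[n] x) - f x‖ / (n:ℝ) ≤ 2 / (n:ℝ)
      gcongr
  have hFinv : ∀ x, F (S x) = F x := fun x =>
    limsup_eq_of_sub (fun n => habs (S x) n) (fun n => habs x n) (hdiff x)
  have hGinv : ∀ x, G (S x) = G x := fun x =>
    liminf_eq_of_sub (fun n => habs (S x) n) (fun n => habs x n) (hdiff x)
  have herg' : PreErgodic S μ := by
    constructor
    intro s hs hinv
    rw [Filter.eventuallyConst_set']
    rcases herg s hs hinv with h | h
    · exact Or.inl (ae_eq_empty.2 h)
    · exact Or.inr (ae_eq_univ.2 h)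
  obtain ⟨cF, hcF⟩ := herg'.ae_eq_const_of_ae_eq_comp hFm (funext hFinv)
  obtain ⟨cG, hcG⟩ := herg'.ae_eq_const_of_ae_eq_comp hGm (funext hGinv)
  obtain ⟨x₀, hx₀F, hx₀G⟩ := (hcF.and hcG).exists
  have h1 : F x₀ = cF := hx₀F
  have h2 : G x₀ = cG := hx₀G
  have hGF : cG ≤ cF := by
    rw [← h1, ← h2]
    exact liminf_le_limsup (bddU (habs x₀)) (bddL (habs x₀))
  have hcF1 : cF ≤ 1 := by
    rw [← h1]
    exact limsup_le_of_le ((bddL (habs x₀)).isCoboundedUnder_le)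
      (Eventually.of_forall fun n => hu1 n x₀)
  have hcG0 : 0 ≤ cG := by
    rw [← h2]
    exact le_liminf_of_le ((bddU (habs x₀)).isCoboundedUnder_ge)
      (Eventually.of_forall fun n => hu0 n x₀)
  set m : ℝ := (μ Set.univ).toReal with hm_def
  have hm0 : 0 < m := ENNReal.toReal_pos hμpos.ne' (measure_ne_top μ _)
  have hIf : ∫ x, f x ∂μ = (μ A).toReal := integral_indicator_one hA
  have hnu : ∀ (n : ℕ) (x : X), 1 ≤ n →
      (n : ℝ) * u n x = ∑ k ∈ Finset.range n, f (S^[k] x) := by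
    intro n x hn
    have hn' : (n : ℝ) ≠ 0 := by positivity
    simp only [hu_def]
    field_simp
  have ineq1 : cF * m ≤ ∫ x, f x ∂μ := by
    refine le_of_forall_pos_le_add fun δ hδ => ?_
    have hε : 0 < δ / m := div_pos hδ hm0
    have hkey : (cF - δ / m) * m ≤ ∫ x, f x ∂μ := by
      refine key_ineq μ S hS hmap f hfm hf0 hf1 _ (by linarith) ?_
      filter_upwards [hcF] with x hx
      have hxF : limsup (fun n => u n x) atTop = cF := hx
      have hlt : cF - δ / m < limsup (fun n => u n x) atTop := by
        rw [hxF]; linarith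
      have hfreq := frequently_lt_of_lt_limsup ((bddL (habs x)).isCoboundedUnder_le) hlt
      obtain ⟨n, hn2, hn1⟩ := (hfreq.and_eventually (eventually_ge_atTop 1)).exists
      refine ⟨n, hn1, ?_⟩
      have := mul_le_mul_of_nonneg_left hn2.le (Nat.cast_nonneg (α := ℝ) n)
      rw [hnu n x hn1] at this
      exact this
    calc cF * m = (cF - δ / m) * m + δ := by field_simp; ring
      _ ≤ (∫ x, f x ∂μ) + δ := by linarith
  have ineq2 : ∫ x, f x ∂μ ≤ cG * m := by
    refine le_of_forall_pos_le_add fun δ hδ => ?_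
    have hε : 0 < δ / m := div_pos hδ hm0
    have hkey : (1 - cG - δ / m) * m ≤ ∫ x, (1 - f x) ∂μ := by
      refine key_ineq μ S hS hmap (fun x => 1 - f x) (measurable_const.sub hfm)
        (fun x => by linarith [hf1 x]) (fun x => by linarith [hf0 x]) _
        (by linarith) ?_
      filter_upwards [hcG] with x hx
      have hxG : liminf (fun n => u n x) atTop = cG := hx
      have hlt : liminf (fun n => u n x) atTop < cG + δ / m := by
        rw [hxG]; linarith
      have hfreq := frequently_lt_of_liminf_lt ((bddU (habs x)).isCoboundedUnder_ge) hlt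
      obtain ⟨n, hn2, hn1⟩ := (hfreq.and_eventually (eventually_ge_atTop 1)).exists
      refine ⟨n, hn1, ?_⟩
      have hle : ∑ k ∈ Finset.range n, f (S^[k] x) ≤ (n : ℝ) * (cG + δ / m) := by
        rw [← hnu n x hn1]
        exact mul_le_mul_of_nonneg_left hn2.le (Nat.cast_nonneg (α := ℝ) n)
      have hsum_eq : ∑ k ∈ Finset.range n, (1 - f (S^[k] x))
          = (n : ℝ) - ∑ k ∈ Finset.range n, f (S^[k] x) := by
        rw [Finset.sum_sub_distrib]
        simp
      rw [hsum_eq]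
      nlinarith
    have hint1 : ∫ x, (1 - f x) ∂μ = m - ∫ x, f x ∂μ := by
      rw [integral_sub (integrable_const 1) hfint, integral_const, smul_eq_mul, mul_one]; rfl
    rw [hint1] at hkey
    nlinarith [div_mul_cancel₀ δ hm0.ne']
  have hFG : cF = cG := by
    have h5 : cF * m ≤ cG * m := ineq1.trans ineq2
    exact le_antisymm (le_of_mul_le_mul_right h5 hm0) hGF
  have hIval : ∫ x, f x ∂μ = cF * m := le_antisymm (by rw [hFG]; exact ineq2) ineq1
  have hc : (μ A).toReal / (μ Set.univ).toReal = cF := by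
    rw [← hIf, ← hm_def, hIval, mul_div_cancel_right₀ _ hm0.ne']
  filter_upwards [hcF, hcG] with x hxF hxG
  have hF' : limsup (fun n => u n x) atTop = (μ A).toReal / (μ Set.univ).toReal := by
    rw [hc]; exact hxF
  have hG' : liminf (fun n => u n x) atTop = (μ A).toReal / (μ Set.univ).toReal := by
    rw [hc, hFG]; exact hxG
  have htendu : Tendsto (fun n => u n x) atTop
      (𝓝 ((μ A).toReal / (μ Set.univ).toReal)) :=
    tendsto_of_liminf_eq_limsup hG' hF' (bddU (habs x)) (bddL (habs x))
  refine htendu.congr fun n => ?_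
  simp only [hu_def]
  rw [← hcard x n]
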